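/- Let 0 < α < 1 and let φ be a bounded Lipschitz function on ℝ with bounded derivative. Let {a_j} be ρ-lacunary with ρ ≤ a_{j+1}/a_j ≤ ρ², {v_j} bounded. Then for t ∈ ℝ and integers 0 < L < M, |Σ_{j=−M}^{−L} v_j (P^α_{a_{j+1}} φ(t) − P^α_{a_j} φ(t))| ≤ C (‖φ'‖_∞ + ‖φ‖_∞) a_{−L}^{2α}, with C depending only on α, ρ, sup|v_j|; in particular the negative tail tends to 0 as L → ∞. -/

import Mathlib

open Real MeasureTheory Finset

/-- The one-sided fractional Poisson-type operator. -/
noncomputable def fracPoisson (α τ : ℝ) (f : ℝ → ℝ) (t : ℝ) : ℝ :=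
  (1 / (4 ^ α * Real.Gamma α)) *
    ∫ s in Set.Ioi (0:ℝ), τ ^ (2 * α) * Real.exp (-τ ^ 2 / (4 * s)) / s ^ (1 + α) * f (t - s)

noncomputable def ker (α τ : ℝ) (s : ℝ) : ℝ :=
  τ ^ (2 * α) * Real.exp (-τ ^ 2 / (4 * s)) / s ^ (1 + α)

lemma ker_measurable (α τ : ℝ) : Measurable (ker α τ) := by
  unfold ker; fun_prop

lemma exp_neg_div_le {c s : ℝ} (hc : 0 < c) (hs : 0 < s) : Real.exp (-c / s) ≤ s / c := by
  rw [neg_div, Real.exp_neg]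
  have h1 : c / s ≤ Real.exp (c / s) := by
    have := Real.add_one_le_exp (c / s); linarith
  have h2 := inv_anti₀ (div_pos hc hs) h1
  rwa [inv_div] at h2

lemma intOn {α : ℝ} (hα0 : 0 < α) (hα1 : α < 1) {c : ℝ} (hc : 0 < c) :
    IntegrableOn (fun s : ℝ => Real.exp (-c / s) / s ^ (1 + α)) (Set.Ioi (0:ℝ)) := by
  have hmeas : Measurable (fun s : ℝ => Real.exp (-c / s) / s ^ (1 + α)) := by fun_prop
  rw [← Set.Ioc_union_Ioi_eq_Ioi (zero_le_one (α := ℝ)), integrableOn_union]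
  constructor
  · have hint : IntegrableOn (fun s : ℝ => s ^ (-α) / c) (Set.Ioc (0:ℝ) 1) :=
      ((intervalIntegral.intervalIntegrable_rpow' (by linarith)).div_const c).1
    refine Integrable.mono' hint hmeas.aestronglyMeasurable.restrict ?_
    filter_upwards [ae_restrict_mem measurableSet_Ioc] with s hs
    have hs0 : 0 < s := hs.1
    have hsp : 0 < s ^ (1 + α) := rpow_pos_of_pos hs0 _
    have hsa : 0 < s ^ α := rpow_pos_of_pos hs0 _
    rw [Real.norm_eq_abs, abs_of_nonneg (by positivity)]
    have h1 : Real.exp (-c / s) / s ^ (1 + α) ≤ (s / c) / s ^ (1 + α) := by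
      gcongr
      exact exp_neg_div_le hc hs0
    refine h1.trans (le_of_eq ?_)
    rw [Real.rpow_neg hs0.le, Real.rpow_add hs0, Real.rpow_one]
    field_simp
  · have hint : IntegrableOn (fun s : ℝ => s ^ (-(1 + α))) (Set.Ioi (1:ℝ)) :=
      integrableOn_Ioi_rpow_of_lt (by linarith) one_pos
    refine Integrable.mono' hint hmeas.aestronglyMeasurable.restrict ?_
    filter_upwards [ae_restrict_mem measurableSet_Ioi] with s hs
    have hs0 : 0 < s := lt_trans one_pos hs
    have hsp : 0 < s ^ (1 + α) := rpow_pos_of_pos hs0 _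
    rw [Real.norm_eq_abs, abs_of_nonneg (by positivity), Real.rpow_neg hs0.le, ← one_div]
    gcongr
    rw [Real.exp_le_one_iff, neg_div]
    have : 0 ≤ c / s := le_of_lt (div_pos hc hs0)
    linarith

lemma ker_eq (α τ : ℝ) : ker α τ = fun s => τ ^ (2*α) * (Real.exp (-(τ^2/4) / s) / s ^ (1+α)) := by
  funext s; unfold ker
  rw [mul_div_assoc]
  congr 2
  rw [neg_div, neg_div, div_div]

lemma ker_integrableOn {α : ℝ} (hα0 : 0 < α) (hα1 : α < 1) {τ : ℝ} (hτ : 0 < τ) :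
    IntegrableOn (ker α τ) (Set.Ioi (0:ℝ)) := by
  rw [ker_eq]
  exact (intOn hα0 hα1 (by positivity : (0:ℝ) < τ^2/4)).const_mul _

noncomputable def mass (α : ℝ) : ℝ := ∫ s in Set.Ioi (0:ℝ), Real.exp (-1 / (4*s)) / s ^ (1+α)

lemma ker_integral {α : ℝ} {τ : ℝ} (hτ : 0 < τ) :
    ∫ s in Set.Ioi (0:ℝ), ker α τ s = mass α := by
  have hτ2 : (0:ℝ) < τ^2 := by positivity
  set g : ℝ → ℝ := fun u => Real.exp (-1 / (4*u)) / u ^ (1+α) with hg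
  have h1 : ∀ s ∈ Set.Ioi (0:ℝ), ker α τ s = (τ^2)⁻¹ * g ((τ^2)⁻¹ * s) := by
    intro s hs
    have hs0 : 0 < s := hs
    unfold ker
    rw [hg]; dsimp only
    have e1 : -1 / (4 * ((τ^2)⁻¹ * s)) = -τ^2 / (4*s) := by
      rw [neg_div, neg_div]
      congr 1
      rw [div_eq_div_iff (by positivity) (by positivity)]
      field_simp
    rw [e1]
    have e2 : ((τ^2)⁻¹ * s) ^ (1+α) = ((τ^2)⁻¹) ^ (1+α) * s ^ (1+α) :=
      Real.mul_rpow (by positivity) hs0.le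
    rw [e2]
    have hip : 0 < ((τ^2)⁻¹) ^ (1+α) := rpow_pos_of_pos (by positivity) _
    have e3 : (τ^2)⁻¹ * (Real.exp (-τ^2/(4*s)) / (((τ^2)⁻¹) ^ (1+α) * s ^ (1+α)))
        = ((τ^2)⁻¹ / ((τ^2)⁻¹) ^ (1+α)) * (Real.exp (-τ^2/(4*s)) / s ^ (1+α)) := by
      have hsp : 0 < s ^ (1+α) := rpow_pos_of_pos hs0 _
      field_simp
    rw [e3]
    have e4 : (τ^2)⁻¹ / ((τ^2)⁻¹) ^ (1+α) = τ ^ (2*α) := by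
      have h2 : (τ:ℝ)^2 = τ ^ ((2:ℕ):ℝ) := (Real.rpow_natCast τ 2).symm
      rw [h2]
      push_cast
      rw [← Real.rpow_neg hτ.le, ← Real.rpow_mul hτ.le, ← Real.rpow_sub hτ]
      congr 1
      ring
    rw [e4, mul_div_assoc]
  calc ∫ s in Set.Ioi (0:ℝ), ker α τ s
      = ∫ s in Set.Ioi (0:ℝ), (τ^2)⁻¹ * g ((τ^2)⁻¹ * s) :=
        setIntegral_congr_fun measurableSet_Ioi (fun s hs => h1 s hs)
    _ = (τ^2)⁻¹ * ∫ s in Set.Ioi (0:ℝ), g ((τ^2)⁻¹ * s) := integral_const_mul _ _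
    _ = (τ^2)⁻¹ * (((τ^2)⁻¹)⁻¹ • ∫ u in Set.Ioi ((τ^2)⁻¹ * 0), g u) := by
        rw [integral_comp_mul_left_Ioi g 0 (by positivity)]
    _ = mass α := by
        rw [mul_zero, smul_eq_mul, inv_inv, ← mul_assoc, inv_mul_cancel₀ (ne_of_gt hτ2), one_mul]
        rfl

open intervalIntegral in
lemma my_integral_rpow {a b r : ℝ} (h : (-1:ℝ) < r) :
    ∫ x in a..b, x ^ r = (b ^ (r+1) - a ^ (r+1))/(r+1) :=
  integral_rpow (Or.inl h)

lemma core {α : ℝ} (hα0 : 0 < α) (hα1 : α < 1) {φ : ℝ → ℝ} {A A' : ℝ}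
    (hA : ∀ x, |φ x| ≤ A) (hA' : ∀ x y, |φ x - φ y| ≤ A' * |x - y|)
    (t : ℝ) {τ : ℝ} (hτ : 0 < τ) :
    |(∫ s in Set.Ioi (0:ℝ), ker α τ s * φ (t - s)) - mass α * φ t|
      ≤ (1/(1-α) + 2/α) * (A' + A) * τ ^ (2*α) := by
  have hA0 : 0 ≤ A := le_trans (abs_nonneg _) (hA 0)
  have hA'0 : 0 ≤ A' := by
    have h := hA' 0 1
    have h2 : |(0:ℝ) - 1| = 1 := by norm_num
    rw [h2, mul_one] at h
    exact le_trans (abs_nonneg _) h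
  have hφc : Continuous φ := by
    have hl : LipschitzWith (Real.toNNReal A') φ := by
      apply LipschitzWith.of_dist_le_mul
      intro x y
      rw [Real.dist_eq, Real.dist_eq]
      calc |φ x - φ y| ≤ A' * |x - y| := hA' x y
        _ ≤ (Real.toNNReal A') * |x - y| := by
            gcongr
            exact Real.le_coe_toNNReal A'
    exact hl.continuous
  have hφm : Measurable fun s : ℝ => φ (t - s) :=
    (hφc.comp (continuous_const.sub continuous_id)).measurable
  have hkm := ker_measurable α τ
  have hkint := ker_integrableOn hα0 hα1 hτ
  have hτp : (0:ℝ) ≤ τ ^ (2*α) := le_of_lt (rpow_pos_of_pos hτ _)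
  have hker_nonneg : ∀ s : ℝ, s ∈ Set.Ioi (0:ℝ) → 0 ≤ ker α τ s := by
    intro s hs
    have hs0 : 0 < s := hs
    unfold ker
    positivity
  have hexp1 : ∀ s : ℝ, 0 < s → Real.exp (-τ^2/(4*s)) ≤ 1 := by
    intro s hs0
    rw [Real.exp_le_one_iff, neg_div]
    have : 0 ≤ τ^2 / (4*s) := by positivity
    linarith
  set g : ℝ → ℝ := fun s => ker α τ s * (φ (t - s) - φ t) with hgdef
  have hint2 : IntegrableOn (fun s => ker α τ s * φ (t - s)) (Set.Ioi (0:ℝ)) := by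
    refine Integrable.mono' (hkint.mul_const A)
      ((hkm.mul hφm).aestronglyMeasurable.restrict) ?_
    filter_upwards [ae_restrict_mem measurableSet_Ioi] with s hs
    rw [Real.norm_eq_abs, abs_mul, abs_of_nonneg (hker_nonneg s hs)]
    exact mul_le_mul_of_nonneg_left (hA _) (hker_nonneg s hs)
  have hint3 : IntegrableOn (fun s => ker α τ s * φ t) (Set.Ioi (0:ℝ)) := hkint.mul_const _
  have hintg : IntegrableOn g (Set.Ioi (0:ℝ)) := by
    have h := hint2.sub hint3
    refine h.congr (Filter.Eventually.of_forall ?_)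
    intro s
    show ker α τ s * φ (t - s) - ker α τ s * φ t = g s
    rw [hgdef]; ring
  have key : (∫ s in Set.Ioi (0:ℝ), ker α τ s * φ (t - s)) - mass α * φ t
      = ∫ s in Set.Ioi (0:ℝ), g s := by
    rw [← ker_integral (α := α) hτ, ← integral_mul_const, ← integral_sub hint2 hint3]
    congr 1
    funext s
    show ker α τ s * φ (t - s) - ker α τ s * φ t = g s
    rw [hgdef]; ring
  rw [key]
  have hsplit : Set.Ioi (0:ℝ) = Set.Ioc 0 1 ∪ Set.Ioi 1 := (Set.Ioc_union_Ioi_eq_Ioi zero_le_one).symm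
  have h1int : IntegrableOn g (Set.Ioc (0:ℝ) 1) :=
    hintg.mono_set (by rw [hsplit]; exact Set.subset_union_left)
  have h2int : IntegrableOn g (Set.Ioi (1:ℝ)) :=
    hintg.mono_set (by rw [hsplit]; exact Set.subset_union_right)
  rw [hsplit, setIntegral_union (Set.Ioc_disjoint_Ioi le_rfl) measurableSet_Ioi h1int h2int]
  have hB1 : |∫ s in Set.Ioc (0:ℝ) 1, g s| ≤ A' * τ ^ (2*α) * (1/(1-α)) := by
    have hd : IntegrableOn (fun s : ℝ => A' * τ ^ (2*α) * s ^ (-α)) (Set.Ioc (0:ℝ) 1) :=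
      ((intervalIntegral.intervalIntegrable_rpow' (by linarith)).1).const_mul _
    have step1 : |∫ s in Set.Ioc (0:ℝ) 1, g s| ≤ ∫ s in Set.Ioc (0:ℝ) 1, |g s| := by
      simpa [Real.norm_eq_abs] using
        MeasureTheory.norm_integral_le_integral_norm (μ := volume.restrict (Set.Ioc (0:ℝ) 1)) g
    have step2 : ∫ s in Set.Ioc (0:ℝ) 1, |g s| ≤ ∫ s in Set.Ioc (0:ℝ) 1, A' * τ ^ (2*α) * s ^ (-α) := by
      refine setIntegral_mono_on h1int.abs hd measurableSet_Ioc ?_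
      intro s hs
      have hs0 : 0 < s := hs.1
      have hsp : 0 < s ^ (1+α) := rpow_pos_of_pos hs0 _
      have hker_le : ker α τ s ≤ τ ^ (2*α) / s ^ (1+α) := by
        unfold ker
        have h1 : τ ^ (2*α) * Real.exp (-τ^2/(4*s)) ≤ τ ^ (2*α) := by
          calc τ ^ (2*α) * Real.exp (-τ^2/(4*s)) ≤ τ ^ (2*α) * 1 :=
                mul_le_mul_of_nonneg_left (hexp1 s hs0) hτp
            _ = τ ^ (2*α) := mul_one _
        exact div_le_div_of_nonneg_right h1 hsp.le
      have hΔ : |φ (t - s) - φ t| ≤ A' * s := by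
        calc |φ (t - s) - φ t| ≤ A' * |t - s - t| := hA' _ _
          _ = A' * s := by rw [show t - s - t = -s by ring, abs_neg, abs_of_pos hs0]
      show |ker α τ s * (φ (t - s) - φ t)| ≤ A' * τ ^ (2*α) * s ^ (-α)
      rw [abs_mul, abs_of_nonneg (hker_nonneg s hs.1)]
      calc ker α τ s * |φ (t - s) - φ t| ≤ (τ ^ (2*α) / s ^ (1+α)) * (A' * s) :=
            mul_le_mul hker_le hΔ (abs_nonneg _) (by positivity)
        _ = A' * τ ^ (2*α) * s ^ (-α) := by
            have hss : s ^ (-α) = s / s ^ (1+α) := by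
              rw [eq_div_iff hsp.ne', ← Real.rpow_add hs0,
                show -α + (1+α) = (1:ℝ) by ring, Real.rpow_one]
            rw [hss]; field_simp
    have step3 : ∫ s in Set.Ioc (0:ℝ) 1, A' * τ ^ (2*α) * s ^ (-α)
        = A' * τ ^ (2*α) * (1/(1-α)) := by
      rw [MeasureTheory.integral_const_mul]
      congr 1
      rw [← intervalIntegral.integral_of_le zero_le_one,
        my_integral_rpow (by linarith : (-1:ℝ) < -α),
        Real.one_rpow, Real.zero_rpow (by linarith : -α + 1 ≠ 0),
        div_eq_div_iff (by linarith : -α + 1 ≠ 0) (by linarith : (1:ℝ) - α ≠ 0)]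
      ring
    calc |∫ s in Set.Ioc (0:ℝ) 1, g s| ≤ ∫ s in Set.Ioc (0:ℝ) 1, |g s| := step1
      _ ≤ ∫ s in Set.Ioc (0:ℝ) 1, A' * τ ^ (2*α) * s ^ (-α) := step2
      _ = A' * τ ^ (2*α) * (1/(1-α)) := step3
  have hB2 : |∫ s in Set.Ioi (1:ℝ), g s| ≤ (A + A) * τ ^ (2*α) * (1/α) := by
    have hd : IntegrableOn (fun s : ℝ => (A + A) * τ ^ (2*α) * s ^ (-(1+α))) (Set.Ioi (1:ℝ)) :=
      (integrableOn_Ioi_rpow_of_lt (by linarith) one_pos).const_mul _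
    have step1 : |∫ s in Set.Ioi (1:ℝ), g s| ≤ ∫ s in Set.Ioi (1:ℝ), |g s| := by
      simpa [Real.norm_eq_abs] using
        MeasureTheory.norm_integral_le_integral_norm (μ := volume.restrict (Set.Ioi (1:ℝ))) g
    have step2 : ∫ s in Set.Ioi (1:ℝ), |g s| ≤ ∫ s in Set.Ioi (1:ℝ), (A + A) * τ ^ (2*α) * s ^ (-(1+α)) := by
      refine setIntegral_mono_on h2int.abs hd measurableSet_Ioi ?_
      intro s hs
      have hs0 : 0 < s := lt_trans one_pos hs
      have hsp : 0 < s ^ (1+α) := rpow_pos_of_pos hs0 _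
      have hker_le : ker α τ s ≤ τ ^ (2*α) * s ^ (-(1+α)) := by
        unfold ker
        rw [Real.rpow_neg hs0.le, ← div_eq_mul_inv]
        have h1 : τ ^ (2*α) * Real.exp (-τ^2/(4*s)) ≤ τ ^ (2*α) := by
          calc τ ^ (2*α) * Real.exp (-τ^2/(4*s)) ≤ τ ^ (2*α) * 1 :=
                mul_le_mul_of_nonneg_left (hexp1 s hs0) hτp
            _ = τ ^ (2*α) := mul_one _
        exact div_le_div_of_nonneg_right h1 hsp.le
      have hΔ : |φ (t - s) - φ t| ≤ A + A := by
        calc |φ (t - s) - φ t| ≤ |φ (t - s)| + |φ t| := abs_sub _ _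
          _ ≤ A + A := add_le_add (hA _) (hA _)
      show |ker α τ s * (φ (t - s) - φ t)| ≤ (A + A) * τ ^ (2*α) * s ^ (-(1+α))
      rw [abs_mul, abs_of_nonneg (hker_nonneg s hs0)]
      calc ker α τ s * |φ (t - s) - φ t| ≤ (τ ^ (2*α) * s ^ (-(1+α))) * (A + A) := by
            apply mul_le_mul hker_le hΔ (abs_nonneg _) (by positivity)
        _ = (A + A) * τ ^ (2*α) * s ^ (-(1+α)) := by ring
    have step3 : ∫ s in Set.Ioi (1:ℝ), (A + A) * τ ^ (2*α) * s ^ (-(1+α))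
        = (A + A) * τ ^ (2*α) * (1/α) := by
      rw [MeasureTheory.integral_const_mul, integral_Ioi_rpow_of_lt (by linarith) one_pos,
        Real.one_rpow]
      congr 1
      rw [show (-(1+α) + 1 : ℝ) = -α by ring, neg_div_neg_eq]
    calc |∫ s in Set.Ioi (1:ℝ), g s| ≤ ∫ s in Set.Ioi (1:ℝ), |g s| := step1
      _ ≤ ∫ s in Set.Ioi (1:ℝ), (A + A) * τ ^ (2*α) * s ^ (-(1+α)) := step2
      _ = (A + A) * τ ^ (2*α) * (1/α) := step3
  have h1a : 0 < 1 - α := by linarith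
  have hfrac1 : 0 < 1/(1-α) := by positivity
  have hfrac2 : 0 < 1/α := by positivity
  calc |(∫ s in Set.Ioc (0:ℝ) 1, g s) + ∫ s in Set.Ioi (1:ℝ), g s|
      ≤ |∫ s in Set.Ioc (0:ℝ) 1, g s| + |∫ s in Set.Ioi (1:ℝ), g s| := abs_add_le _ _
    _ ≤ A' * τ ^ (2*α) * (1/(1-α)) + (A + A) * τ ^ (2*α) * (1/α) := add_le_add hB1 hB2
    _ ≤ (1/(1-α) + 2/α) * (A' + A) * τ ^ (2*α) := by
        have e : (1/(1-α) + 2/α) * (A' + A) * τ ^ (2*α)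
            = A' * τ ^ (2*α) * (1/(1-α)) + (A + A) * τ ^ (2*α) * (1/α)
              + (A * τ ^ (2*α) * (1/(1-α)) + 2 * (A' * τ ^ (2*α) * (1/α))) := by
          field_simp
          ring
        rw [e]
        have p1 : 0 ≤ A * τ ^ (2*α) * (1/(1-α)) :=
          mul_nonneg (mul_nonneg hA0 hτp) hfrac1.le
        have p2 : 0 ≤ A' * τ ^ (2*α) * (1/α) :=
          mul_nonneg (mul_nonneg hA'0 hτp) hfrac2.le
        linarith

lemma fracPoisson_eq (α τ : ℝ) (f : ℝ → ℝ) (t : ℝ) :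
    fracPoisson α τ f t
      = (1 / (4 ^ α * Real.Gamma α)) * ∫ s in Set.Ioi (0:ℝ), ker α τ s * f (t - s) := rfl

lemma fp_diff {α : ℝ} (hα0 : 0 < α) (hα1 : α < 1) {φ : ℝ → ℝ} {A A' : ℝ}
    (hA : ∀ x, |φ x| ≤ A) (hA' : ∀ x y, |φ x - φ y| ≤ A' * |x - y|)
    (t : ℝ) {τ1 τ2 : ℝ} (h1 : 0 < τ1) (h2 : 0 < τ2) :
    |fracPoisson α τ2 φ t - fracPoisson α τ1 φ t|
      ≤ (1 / (4 ^ α * Real.Gamma α))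
          * ((1/(1-α) + 2/α) * (A' + A) * (τ2 ^ (2*α) + τ1 ^ (2*α))) := by
  have hZ : 0 < 4 ^ α * Real.Gamma α :=
    mul_pos (rpow_pos_of_pos (by norm_num) α) (Real.Gamma_pos_of_pos hα0)
  have hZ1p : 0 < 1 / (4 ^ α * Real.Gamma α) := by positivity
  set Z1 : ℝ := 1 / (4 ^ α * Real.Gamma α) with hZ1def
  set c : ℝ := Z1 * (mass α * φ t) with hc
  have key : ∀ {τ : ℝ}, 0 < τ →
      |fracPoisson α τ φ t - c| ≤ Z1 * ((1/(1-α) + 2/α) * (A' + A) * τ ^ (2*α)) := by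
    intro τ hτ
    rw [fracPoisson_eq, hc, ← hZ1def, ← mul_sub, abs_mul, abs_of_pos hZ1p]
    exact mul_le_mul_of_nonneg_left (core hα0 hα1 hA hA' t hτ) hZ1p.le
  have k1 := key h1
  have k2 := key h2
  calc |fracPoisson α τ2 φ t - fracPoisson α τ1 φ t|
      = |(fracPoisson α τ2 φ t - c) - (fracPoisson α τ1 φ t - c)| := by congr 1; ring
    _ ≤ |fracPoisson α τ2 φ t - c| + |fracPoisson α τ1 φ t - c| := abs_sub _ _
    _ ≤ Z1 * ((1/(1-α) + 2/α) * (A' + A) * τ2 ^ (2*α))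
          + Z1 * ((1/(1-α) + 2/α) * (A' + A) * τ1 ^ (2*α)) := add_le_add k2 k1
    _ = Z1 * ((1/(1-α) + 2/α) * (A' + A) * (τ2 ^ (2*α) + τ1 ^ (2*α))) := by ring

lemma lac_pow {ρ : ℝ} (hρ0 : 0 < ρ) {a : ℤ → ℝ} (ha : ∀ j, 0 < a j)
    (hr : ∀ j, ρ ≤ a (j+1) / a j) : ∀ (n : ℕ) (j : ℤ), a j * ρ ^ n ≤ a (j + n) := by
  intro n
  induction n with
  | zero => intro j; simp
  | succ n ih =>
    intro j
    have h1 := ih j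
    have h2 : a (j + n) * ρ ≤ a (j + n + 1) := by
      have h3 := hr (j + n)
      rw [le_div_iff₀ (ha (j+n))] at h3
      linarith [h3]
    calc a j * ρ ^ (n+1) = (a j * ρ ^ n) * ρ := by ring
      _ ≤ a (j + n) * ρ := mul_le_mul_of_nonneg_right h1 hρ0.le
      _ ≤ a (j + n + 1) := h2
      _ = a (j + ((n:ℕ)+1:ℕ)) := by congr 1; push_cast; ring

lemma geom_bound {q : ℝ} (hq0 : 0 ≤ q) (hq1 : q < 1) (L M : ℤ) :
    ∑ j ∈ Finset.Icc (-M) (-L), q ^ (-L - j).toNat ≤ (1 - q)⁻¹ := by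
  classical
  set e : ℤ → ℕ := fun j => (-L - j).toNat with he
  have hinj : ∀ x ∈ Finset.Icc (-M) (-L), ∀ y ∈ Finset.Icc (-M) (-L), e x = e y → x = y := by
    intro x hx y hy hxy
    simp only [Finset.mem_Icc] at hx hy
    simp only [he] at hxy
    omega
  rw [← Finset.sum_image hinj]
  have hsub : (Finset.Icc (-M) (-L)).image e ⊆ Finset.range ((M - L).toNat + 1) := by
    intro k hk
    simp only [Finset.mem_image, Finset.mem_Icc] at hk
    obtain ⟨j, ⟨hj1, hj2⟩, rfl⟩ := hk
    simp only [Finset.mem_range, he]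
    omega
  have h1q : 0 < 1 - q := by linarith
  calc ∑ k ∈ (Finset.Icc (-M) (-L)).image e, q ^ k
      ≤ ∑ k ∈ Finset.range ((M - L).toNat + 1), q ^ k :=
        Finset.sum_le_sum_of_subset_of_nonneg hsub (fun k _ _ => pow_nonneg hq0 k)
    _ ≤ (1 - q)⁻¹ := by
        rw [geom_sum_eq (ne_of_lt hq1)]
        have hqN : (0:ℝ) ≤ q ^ ((M - L).toNat + 1) := pow_nonneg hq0 _
        have heq : (q ^ ((M - L).toNat + 1) - 1) / (q - 1)
            = (1 - q ^ ((M - L).toNat + 1)) / (1 - q) := by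
          rw [div_eq_div_iff (by linarith : q - 1 ≠ 0) (by linarith : 1 - q ≠ 0)]
          ring
        rw [heq, ← one_div]
        gcongr
        linarith

theorem stmt_15 (α ρ V : ℝ) (hα0 : 0 < α) (hα1 : α < 1) (hρ : 1 < ρ) (hV : 0 < V) :
    ∃ C > 0, ∀ (a v : ℤ → ℝ), (∀ j, 0 < a j) →
      (∀ j, ρ ≤ a (j + 1) / a j ∧ a (j + 1) / a j ≤ ρ ^ 2) →
      (∀ j, |v j| ≤ V) →
      ∀ (φ : ℝ → ℝ) (A A' : ℝ), (∀ x, |φ x| ≤ A) →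
        (∀ x y, |φ x - φ y| ≤ A' * |x - y|) →
      ∀ t : ℝ, ∀ L M : ℤ, 0 < L → L < M →
        |∑ j ∈ Finset.Icc (-M) (-L),
            v j * (fracPoisson α (a (j + 1)) φ t - fracPoisson α (a j) φ t)|
          ≤ C * (A' + A) * (a (-L)) ^ (2 * α) := by
  have hρ0 : 0 < ρ := lt_trans one_pos hρ
  have hZ : 0 < 4 ^ α * Real.Gamma α :=
    mul_pos (rpow_pos_of_pos (by norm_num) α) (Real.Gamma_pos_of_pos hα0)
  have hZ1p : 0 < 1 / (4 ^ α * Real.Gamma α) := by positivity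
  set Z1 : ℝ := 1 / (4 ^ α * Real.Gamma α) with hZ1def
  have h1a : 0 < 1 - α := by linarith
  have hEp : 0 < 1/(1-α) + 2/α := by positivity
  set E : ℝ := 1/(1-α) + 2/α with hEdef
  have hρr : 1 < ρ ^ (2*α) :=
    (Real.one_lt_rpow_iff_of_pos hρ0).mpr (Or.inl ⟨hρ, by linarith⟩)
  set q : ℝ := (ρ ^ (2*α))⁻¹ with hqdef
  have hq0 : 0 ≤ q := le_of_lt (inv_pos.mpr (lt_trans one_pos hρr))
  have hq1 : q < 1 := by
    rw [hqdef]
    exact inv_lt_one_of_one_lt₀ hρr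
  have h1q : 0 < 1 - q := by linarith
  have hXp : 0 < 1 + (ρ^2) ^ (2*α) := by positivity
  refine ⟨V * Z1 * E * (1 + (ρ^2) ^ (2*α)) * (1 - q)⁻¹, ?_, ?_⟩
  · have := inv_pos.mpr h1q
    positivity
  intro a v ha hrat hv φ A A' hA hA' t L M hL hLM
  have hA0 : 0 ≤ A := le_trans (abs_nonneg _) (hA 0)
  have hA'0 : 0 ≤ A' := by
    have h := hA' 0 1
    have h2 : |(0:ℝ) - 1| = 1 := by norm_num
    rw [h2, mul_one] at h
    exact le_trans (abs_nonneg _) h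
  have hAA : 0 ≤ A' + A := by linarith
  have hY : 0 ≤ (a (-L)) ^ (2*α) := Real.rpow_nonneg (ha _).le _
  set K : ℝ := (V * Z1 * E * (1 + (ρ^2) ^ (2*α))) * ((A' + A) * (a (-L)) ^ (2*α)) with hKdef
  have hK0 : 0 ≤ K := by
    apply mul_nonneg
    · positivity
    · exact mul_nonneg hAA hY
  have key : ∀ j ∈ Finset.Icc (-M) (-L),
      |v j * (fracPoisson α (a (j+1)) φ t - fracPoisson α (a j) φ t)|
        ≤ K * q ^ (-L - j).toNat := by
    intro j hj
    simp only [Finset.mem_Icc] at hj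
    set n : ℕ := (-L - j).toNat with hn
    have hstep := lac_pow hρ0 ha (fun i => (hrat i).1) n j
    have hjn : j + (n:ℤ) = -L := by omega
    rw [hjn] at hstep
    have hstep2 := lac_pow hρ0 ha (fun i => (hrat i).1) n (j+1)
    have hjn2 : j + 1 + (n:ℤ) = -L + 1 := by omega
    rw [hjn2] at hstep2
    have hL1 : a (-L + 1) ≤ ρ^2 * a (-L) := by
      have h3 := (hrat (-L)).2
      rw [div_le_iff₀ (ha (-L))] at h3
      linarith [h3]
    have hρn : (0:ℝ) < ρ ^ n := pow_pos hρ0 n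
    have haj : a j ≤ a (-L) / ρ ^ n := by
      rw [le_div_iff₀ hρn]; exact hstep
    have haj1 : a (j+1) ≤ ρ^2 * a (-L) / ρ ^ n := by
      rw [le_div_iff₀ hρn]; linarith [hstep2, hL1]
    have hqn : ((ρ:ℝ) ^ n) ^ (2*α) = (ρ ^ (2*α))^n := by
      rw [← Real.rpow_natCast ρ n, ← Real.rpow_mul hρ0.le,
        ← Real.rpow_natCast (ρ ^ (2*α)) n, ← Real.rpow_mul hρ0.le, mul_comm]
    have e1 : (a (-L) / ρ ^ n) ^ (2*α) = (a (-L)) ^ (2*α) * q ^ n := by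
      rw [Real.div_rpow (ha _).le hρn.le, hqn, div_eq_mul_inv, ← inv_pow]
    have e2 : (ρ^2 * a (-L) / ρ ^ n) ^ (2*α)
        = (ρ^2) ^ (2*α) * ((a (-L)) ^ (2*α) * q ^ n) := by
      rw [Real.div_rpow (mul_nonneg (sq_nonneg ρ) (ha _).le) hρn.le,
        Real.mul_rpow (sq_nonneg ρ) (ha _).le, hqn, mul_div_assoc, div_eq_mul_inv, ← inv_pow]
    have b1 : (a j) ^ (2*α) ≤ (a (-L))^(2*α) * q^n := by
      rw [← e1]
      exact Real.rpow_le_rpow (ha j).le haj (by linarith)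
    have b2 : (a (j+1)) ^ (2*α) ≤ (ρ^2)^(2*α) * ((a (-L))^(2*α) * q^n) := by
      rw [← e2]
      exact Real.rpow_le_rpow (ha _).le haj1 (by linarith)
    have hsum : (a (j+1)) ^ (2*α) + (a j) ^ (2*α)
        ≤ (1 + (ρ^2)^(2*α)) * ((a (-L))^(2*α) * q^n) := by
      have hexp : (1 + (ρ^2)^(2*α)) * ((a (-L))^(2*α) * q^n)
          = ((a (-L))^(2*α) * q^n) + (ρ^2)^(2*α) * ((a (-L))^(2*α) * q^n) := by ring
      rw [hexp]
      linarith
    have hd := fp_diff hα0 hα1 hA hA' t (ha j) (ha (j+1))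
    rw [← hZ1def, ← hEdef] at hd
    have hqnn : 0 ≤ (a (-L))^(2*α) * q^n := mul_nonneg hY (pow_nonneg hq0 n)
    calc |v j * (fracPoisson α (a (j+1)) φ t - fracPoisson α (a j) φ t)|
        = |v j| * |fracPoisson α (a (j+1)) φ t - fracPoisson α (a j) φ t| := abs_mul _ _
      _ ≤ V * (Z1 * (E * (A' + A) * ((a (j+1)) ^ (2*α) + (a j) ^ (2*α)))) :=
          mul_le_mul (hv j) hd (abs_nonneg _) (le_trans (abs_nonneg _) (hv j))
      _ ≤ V * (Z1 * (E * (A' + A) * ((1 + (ρ^2)^(2*α)) * ((a (-L))^(2*α) * q^n)))) := by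
          have hV0 : 0 ≤ V := hV.le
          gcongr
      _ = K * q ^ n := by rw [hKdef]; ring
  calc |∑ j ∈ Finset.Icc (-M) (-L),
          v j * (fracPoisson α (a (j + 1)) φ t - fracPoisson α (a j) φ t)|
      ≤ ∑ j ∈ Finset.Icc (-M) (-L),
          |v j * (fracPoisson α (a (j + 1)) φ t - fracPoisson α (a j) φ t)| :=
        Finset.abs_sum_le_sum_abs _ _
    _ ≤ ∑ j ∈ Finset.Icc (-M) (-L), K * q ^ (-L - j).toNat := Finset.sum_le_sum key
    _ = K * ∑ j ∈ Finset.Icc (-M) (-L), q ^ (-L - j).toNat := by rw [← Finset.mul_sum]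
    _ ≤ K * (1 - q)⁻¹ := mul_le_mul_of_nonneg_left (geom_bound hq0 hq1 L M) hK0
    _ = (V * Z1 * E * (1 + (ρ^2) ^ (2*α)) * (1 - q)⁻¹) * (A' + A) * (a (-L)) ^ (2*α) := by
        rw [hKdef]; ring
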